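/- arXiv:1307.6533 — 6 statements merged into one kernel-verified Lean document; each statement's English description precedes it below -/
import Mathlib

section
/- If H is a subgroup of a finite group G, then the commuting probability of H is at least the commuting probability of G. -/
open MulAction

section main
variable {G : Type*} [Group G] [Finite G] (H : Subgroup G)

private def Kc (H : Subgroup G) : Subgroup (ConjAct G) :=
  H.map (ConjAct.toConjAct : G ≃* ConjAct G).toMonoidHom

private lemma card_fixedBy_conj {Γ : Type*} [Group Γ] (γ : Γ) :
    Nat.card (fixedBy Γ (ConjAct.toConjAct γ)) = Nat.card (Subgroup.centralizer {γ}) := by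
  apply Nat.card_congr
  apply Equiv.setCongr
  ext x
  simp only [mem_fixedBy, ConjAct.toConjAct_smul, SetLike.mem_coe,
    Subgroup.mem_centralizer_iff, Set.mem_singleton_iff, forall_eq,
    mul_inv_eq_iff_eq_mul]

private lemma card_centralizer_le {G : Type*} [Group G] [Finite G] (H : Subgroup G) (h : H) :
    Nat.card (Subgroup.centralizer {(h : G)}) * Nat.card H ≤
      Nat.card (Subgroup.centralizer {h} : Subgroup H) * Nat.card G := by
  set C := Subgroup.centralizer {(h : G)} with hCdef
  -- card of centralizer in H equals card of H ∩ C
  have h1 : Nat.card (Subgroup.centralizer {h} : Subgroup H) = Nat.card (H.subgroupOf C) := by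
    apply Nat.card_congr
    refine ⟨fun x => ⟨⟨(x : H), ?_⟩, ?_⟩, fun y => ⟨⟨(y.1 : G), ?_⟩, ?_⟩, ?_, ?_⟩
    · rw [hCdef, Subgroup.mem_centralizer_iff]
      rintro s rfl
      exact_mod_cast congrArg (Subtype.val) (Subgroup.mem_centralizer_iff.mp x.2 h rfl)
    · exact Subgroup.mem_subgroupOf.mpr (SetLike.coe_mem (x : H))
    · exact Subgroup.mem_subgroupOf.mp y.2
    · rw [Subgroup.mem_centralizer_iff]
      rintro s rfl
      ext
      exact Subgroup.mem_centralizer_iff.mp (SetLike.coe_mem y.1) _ rfl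
    · intro x; rfl
    · intro y; rfl
  rw [h1]
  -- |C| = |H ∩ C| * relindex, relindex ≤ index, |H| * index = |G|
  have h2 : Nat.card (H.subgroupOf C) * H.relIndex C = Nat.card C :=
    Subgroup.card_mul_index (H.subgroupOf C)
  have h3 : H.relIndex C ≤ H.index := by
    rw [← Subgroup.relIndex_top_right]
    exact Subgroup.relIndex_le_of_le_right le_top
      (by rw [Subgroup.relIndex_top_right]; exact H.index_ne_zero_of_finite)
  calc Nat.card C * Nat.card H = Nat.card (H.subgroupOf C) * H.relIndex C * Nat.card H := by
        rw [h2]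
    _ ≤ Nat.card (H.subgroupOf C) * H.index * Nat.card H := by
        exact Nat.mul_le_mul_right _ (Nat.mul_le_mul_left _ h3)
    _ = Nat.card (H.subgroupOf C) * (Nat.card H * H.index) := by ring
    _ = Nat.card (H.subgroupOf C) * Nat.card G := by rw [H.card_mul_index]

private lemma card_fixedBy_sub {G : Type*} [Group G] [Finite G] (H : Subgroup G) (h : H) :
    Nat.card (fixedBy (↥H) (ConjAct.toConjAct h)) = Nat.card (Subgroup.centralizer {h} : Subgroup H) :=
  card_fixedBy_conj h

private lemma key : Nat.card (ConjClasses G) * Nat.card H ≤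
    Nat.card (ConjClasses H) * Nat.card G := by
  classical
  have := Fintype.ofFinite G
  have := Fintype.ofFinite H
  set K := Kc H with hK
  -- Burnside for K acting on G by conjugation
  have hb : (∑ k : K, Fintype.card (fixedBy G (k : ConjAct G))) =
      Fintype.card (Quotient (orbitRel K G)) * Fintype.card K :=
    MulAction.sum_card_fixedBy_eq_card_orbits_mul_card_group K G
  -- Burnside for ConjAct H acting on H
  have hb' : (∑ a : ConjAct ↥H, Fintype.card (fixedBy ↥H a)) =
      Fintype.card (Quotient (orbitRel (ConjAct ↥H) ↥H)) * Fintype.card (ConjAct ↥H) :=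
    MulAction.sum_card_fixedBy_eq_card_orbits_mul_card_group (ConjAct ↥H) ↥H
  -- orbit quotient of ConjAct H on H is ConjClasses H
  have hcc : Fintype.card (Quotient (orbitRel (ConjAct ↥H) ↥H)) =
      Fintype.card (ConjClasses ↥H) := by
    apply Fintype.card_congr'; congr; ext
    exact (Setoid.comm' _).trans isConj_iff.symm
  -- step A : kG ≤ card orbit quotient of K on G
  have hA : Nat.card (ConjClasses G) ≤ Fintype.card (Quotient (orbitRel K G)) := by
    rw [Nat.card_eq_fintype_card]
    apply Fintype.card_le_of_surjective
      (Quotient.lift (fun g => ConjClasses.mk g) ?_) ?_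
    · intro a b hab
      rw [ConjClasses.mk_eq_mk_iff_isConj]
      obtain ⟨⟨k, hk⟩, hkb⟩ := hab
      obtain ⟨h, _, rfl⟩ := hk
      refine IsConj.symm (isConj_iff.mpr ⟨h, ?_⟩)
      simpa [ConjAct.toConjAct_smul] using hkb
    · intro c
      obtain ⟨g, rfl⟩ := ConjClasses.mk_surjective c
      exact ⟨⟦g⟧, rfl⟩
  -- reindex: equivalence H ≃ K
  let e : ↥H ≃* K := Subgroup.equivMapOfInjective H _
    ((ConjAct.toConjAct : G ≃* ConjAct G).injective)
  have hcardK : Fintype.card K = Nat.card ↥H := by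
    rw [← Nat.card_eq_fintype_card]
    exact (Nat.card_congr e.toEquiv).symm
  have hsum1 : (∑ k : K, Fintype.card (fixedBy G (k : ConjAct G))) =
      ∑ h : ↥H, Fintype.card (fixedBy G (ConjAct.toConjAct (h : G))) := by
    refine (Fintype.sum_equiv e.toEquiv _ _ fun h => rfl).symm
  -- per-term inequality
  have hterm : ∀ h : ↥H, Fintype.card (fixedBy G (ConjAct.toConjAct (h : G))) * Nat.card ↥H ≤
      Fintype.card (fixedBy ↥H (ConjAct.toConjAct h)) * Nat.card G := by
    intro h
    rw [← Nat.card_eq_fintype_card, ← Nat.card_eq_fintype_card, card_fixedBy_conj,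
      card_fixedBy_sub]
    exact card_centralizer_le H h
  -- sum over H of fixH equals kH * |H|
  have hsum2 : (∑ h : ↥H, Fintype.card (fixedBy ↥H (ConjAct.toConjAct h))) =
      Nat.card (ConjClasses ↥H) * Nat.card ↥H := by
    have hre : (∑ h : ↥H, Fintype.card (fixedBy ↥H (ConjAct.toConjAct h))) =
        ∑ a : ConjAct ↥H, Fintype.card (fixedBy ↥H a) :=
      Fintype.sum_equiv (ConjAct.toConjAct : ↥H ≃* ConjAct ↥H).toEquiv _ _ (fun h => rfl)
    rw [hre, hb', hcc, Nat.card_eq_fintype_card, Nat.card_eq_fintype_card]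
    congr 1
  -- assemble
  have hHpos : 0 < Nat.card ↥H := Nat.card_pos
  apply Nat.le_of_mul_le_mul_right _ hHpos
  calc Nat.card (ConjClasses G) * Nat.card ↥H * Nat.card ↥H
      ≤ Fintype.card (Quotient (orbitRel K G)) * Nat.card ↥H * Nat.card ↥H := by
        exact Nat.mul_le_mul_right _ (Nat.mul_le_mul_right _ hA)
    _ = (∑ h : ↥H, Fintype.card (fixedBy G (ConjAct.toConjAct (h : G)))) * Nat.card ↥H := by
        rw [← hsum1, hb, hcardK]
    _ = ∑ h : ↥H, Fintype.card (fixedBy G (ConjAct.toConjAct (h : G))) * Nat.card ↥H := by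
        rw [Finset.sum_mul]
    _ ≤ ∑ h : ↥H, Fintype.card (fixedBy ↥H (ConjAct.toConjAct h)) * Nat.card G :=
        Finset.sum_le_sum fun h _ => hterm h
    _ = (∑ h : ↥H, Fintype.card (fixedBy ↥H (ConjAct.toConjAct h))) * Nat.card G := by
        rw [Finset.sum_mul]
    _ = Nat.card (ConjClasses ↥H) * Nat.card ↥H * Nat.card G := by rw [hsum2]
    _ = Nat.card (ConjClasses ↥H) * Nat.card G * Nat.card ↥H := by ring
end main


theorem commProb_le_of_subgroup {G : Type*} [Group G] [Finite G] (H : Subgroup G) :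
    commProb G ≤ commProb H := by
  rw [commProb_def', commProb_def', div_le_div_iff₀ (by exact_mod_cast Nat.card_pos)
    (by exact_mod_cast Nat.card_pos)]
  exact_mod_cast key H
end

section
/- If N is a normal subgroup of a finite group G, then the commuting probability of the quotient G/N is at least the commuting probability of G. -/
theorem commProb_le_of_quotient {G : Type*} [Group G] [Finite G] (N : Subgroup G) [N.Normal] :
    commProb G ≤ commProb (G ⧸ N) := by
  have key : Nat.card { p : G × G // Commute p.1 p.2 } ≤
      Nat.card { q : (G ⧸ N) × (G ⧸ N) // Commute q.1 q.2 } * Nat.card (N × N) := by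
    rw [← Nat.card_prod]
    refine Nat.card_le_card_of_injective (fun p =>
      (⟨((p.1.1 : G ⧸ N), (p.1.2 : G ⧸ N)), p.2.map (QuotientGroup.mk' N)⟩,
       (⟨((p.1.1 : G ⧸ N)).out⁻¹ * p.1.1, by
          rw [← QuotientGroup.eq]
          exact (QuotientGroup.out_eq' _)⟩,
        ⟨((p.1.2 : G ⧸ N)).out⁻¹ * p.1.2, by
          rw [← QuotientGroup.eq]
          exact (QuotientGroup.out_eq' _)⟩))) ?_
    rintro ⟨⟨x₁, x₂⟩, hx⟩ ⟨⟨y₁, y₂⟩, hy⟩ h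
    simp only [Prod.ext_iff, Subtype.ext_iff, Subtype.mk.injEq] at h
    obtain ⟨⟨h1, h2⟩, h3, h4⟩ := h
    have e1 : x₁ = y₁ := by
      have := h3
      rw [h1] at this
      exact mul_left_cancel this
    have e2 : x₂ = y₂ := by
      have := h4
      rw [h2] at this
      exact mul_left_cancel this
    simp [e1, e2]
  have hQ : (0:ℚ) < (Nat.card (G ⧸ N) : ℚ) := Nat.cast_pos.mpr Nat.card_pos
  have hN : (0:ℚ) < (Nat.card N : ℚ) := Nat.cast_pos.mpr Nat.card_pos
  have hG : (Nat.card G : ℚ) = Nat.card (G ⧸ N) * Nat.card N := by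
    rw [← Nat.cast_mul, Nat.cast_inj, mul_comm]
    exact (Subgroup.card_eq_card_quotient_mul_card_subgroup N).trans (by rw [mul_comm])
  rw [commProb_def, commProb_def, hG, div_le_div_iff₀ (by positivity) (by positivity)]
  calc (Nat.card { p : G × G // Commute p.1 p.2 } : ℚ) * (Nat.card (G ⧸ N) : ℚ) ^ 2
      ≤ ((Nat.card { q : (G ⧸ N) × (G ⧸ N) // Commute q.1 q.2 } : ℚ) * (Nat.card N : ℚ)^2) *
        (Nat.card (G ⧸ N) : ℚ) ^ 2 := by
        have : (Nat.card { p : G × G // Commute p.1 p.2 } : ℚ) ≤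
            (Nat.card { q : (G ⧸ N) × (G ⧸ N) // Commute q.1 q.2 } : ℚ) * (Nat.card N : ℚ)^2 := by
          rw [← Nat.cast_pow, ← Nat.cast_mul, Nat.cast_le]
          simpa [Nat.card_prod, sq] using key
        exact mul_le_mul_of_nonneg_right this (by positivity)
    _ = (Nat.card { q : (G ⧸ N) × (G ⧸ N) // Commute q.1 q.2 } : ℚ) *
        ((Nat.card (G ⧸ N) : ℚ) * (Nat.card N : ℚ)) ^ 2 := by ring
end

section
/- If G is a finite nonabelian group, then the commuting probability of G is strictly greater than 1/|[G,G]|. -/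
open scoped commutatorElement

theorem commProb_gt_inv_card_commutator {G : Type*} [Group G] [Finite G]
    (h : ∃ a b : G, a * b ≠ b * a) :
    commProb G > 1 / (Nat.card (commutator G) : ℚ) := by
  obtain ⟨a, b, hab⟩ := h
  set f : ConjClasses G → ConjClasses (Abelianization G) :=
    ConjClasses.map (Abelianization.of)
  have hfsurj : Function.Surjective f :=
    ConjClasses.map_surjective (fun y => Quotient.inductionOn' y fun x => ⟨x, rfl⟩)
  have hfnotinj : ¬ Function.Injective f := by
    intro hinj
    have hc : ⁅a, b⁆ ≠ (1 : G) :=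
      fun h' => hab (commutatorElement_eq_one_iff_mul_comm.mp h')
    apply hc
    have h1 : f (ConjClasses.mk ⁅a, b⁆) = f (ConjClasses.mk (1 : G)) := by
      have h2 : Abelianization.of ⁅a, b⁆ = (1 : Abelianization G) := by
        rw [map_commutatorElement]
        exact commutatorElement_eq_one_iff_mul_comm.mpr (mul_comm _ _)
      show ConjClasses.mk (Abelianization.of ⁅a, b⁆) = ConjClasses.mk (Abelianization.of 1)
      rw [h2, map_one]
    have h3 := hinj h1
    rw [ConjClasses.mk_eq_mk_iff_isConj] at h3
    exact isConj_one_left.mp h3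
  have hlt : Nat.card (ConjClasses (Abelianization G)) < Nat.card (ConjClasses G) := by
    rcases lt_or_eq_of_le (Nat.card_le_card_of_surjective f hfsurj) with h' | h'
    · exact h'
    · exact absurd ((Nat.bijective_iff_surjective_and_card f).mpr ⟨hfsurj, h'.symm⟩).injective
        hfnotinj
  have hab_card : Nat.card (ConjClasses (Abelianization G)) = (commutator G).index := by
    rw [Nat.card_congr ConjClasses.mkEquiv.symm]
    rfl
  have hGpos : 0 < Nat.card G := Nat.card_pos
  have hcard : Nat.card (commutator G) * (commutator G).index = Nat.card G :=
    Subgroup.card_mul_index _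
  rw [commProb_def']
  rw [gt_iff_lt, div_lt_div_iff₀ (by exact_mod_cast (Nat.card_pos : 0 < Nat.card (commutator G)))
    (by exact_mod_cast hGpos)]
  have hkey : ((commutator G).index : ℚ) < Nat.card (ConjClasses G) := by
    exact_mod_cast hab_card ▸ hlt
  calc (1 : ℚ) * Nat.card G = Nat.card (commutator G) * (commutator G).index := by
        rw [one_mul]; exact_mod_cast hcard.symm
    _ < (Nat.card (ConjClasses G) : ℚ) * Nat.card (commutator G) := by
        have hpos : (0 : ℚ) < Nat.card (commutator G) := by
          exact_mod_cast (Nat.card_pos : 0 < Nat.card (commutator G))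
        rw [mul_comm ((Nat.card (commutator G) : ℚ))]
        exact mul_lt_mul_of_pos_right hkey hpos
end

section
/- If G is a finite nonabelian p-group whose commutator subgroup has order at most p², then cp(G) > (2p² + p − 2)/p⁵. -/
open scoped commutatorElement

lemma conjClass_card_le_card_commutator {G : Type*} [Group G] [Finite G] (x : ConjClasses G) :
    x.carrier.ncard ≤ Nat.card (commutator G) := by
  obtain ⟨g, rfl⟩ := ConjClasses.mk_surjective x
  rw [← Nat.card_coe_set_eq]
  have : ∀ y : (ConjClasses.mk g).carrier, (y : G) * g⁻¹ ∈ commutator G := by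
    rintro ⟨y, hy⟩
    rw [ConjClasses.mem_carrier_iff_mk_eq, ConjClasses.mk_eq_mk_iff_isConj] at hy
    obtain ⟨z, hz⟩ := hy
    have hy2 : y = (↑z : G)⁻¹ * g * ↑z := by rw [mul_assoc, ← hz, inv_mul_cancel_left]
    have : (y : G) * g⁻¹ = ⁅((↑z : G))⁻¹, g⁆ := by
      rw [hy2, commutatorElement_def, inv_inv]
    rw [this]
    exact Subgroup.commutator_mem_commutator (Subgroup.mem_top _) (Subgroup.mem_top _)
  apply Nat.card_le_card_of_injective
    (fun y : (ConjClasses.mk g).carrier => (⟨(y : G) * g⁻¹, this y⟩ : commutator G))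
  intro a b hab
  simpa [Subtype.ext_iff] using hab

theorem commProb_gt_of_small_commutator {p : ℕ} (hp : p.Prime) {G : Type*} [Group G] [Finite G]
    (hG : IsPGroup p G) (hna : ∃ a b : G, a * b ≠ b * a)
    (hcomm : Nat.card (commutator G) ≤ p ^ 2) :
    commProb G > (2 * p ^ 2 + p - 2 : ℚ) / (p : ℚ) ^ 5 := by
  classical
  cases nonempty_fintype G
  set c := Nat.card (commutator G) with hc
  set k := Nat.card (ConjClasses G) with hk
  set n := Nat.card G with hn
  -- commutator is nontrivial
  obtain ⟨a, b, hab⟩ := hna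
  have hc2 : 2 ≤ c := by
    have : Nontrivial (commutator G) := by
      refine ⟨⟨⁅a, b⁆, Subgroup.commutator_mem_commutator (Subgroup.mem_top _)
        (Subgroup.mem_top _)⟩, 1, ?_⟩
      simp only [ne_eq, Subtype.ext_iff, Subgroup.coe_one]
      rw [commutatorElement_eq_one_iff_mul_comm]
      exact hab
    exact Finite.one_lt_card
  -- identity class is a singleton
  have hone : (ConjClasses.mk (1 : G)).carrier = {1} := by
    ext y
    simp [ConjClasses.mem_carrier_iff_mk_eq, ConjClasses.mk_eq_mk_iff_isConj, eq_comm,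
      isConj_one_right]
  -- class equation gives n < k * c
  have hkey : n < k * c := by
    have hsum : ∑ x : ConjClasses G, x.carrier.ncard = n := by
      have := Group.sum_card_conj_classes_eq_card G
      rwa [finsum_eq_sum_of_fintype] at this
    calc n = ∑ x : ConjClasses G, x.carrier.ncard := hsum.symm
      _ < ∑ _x : ConjClasses G, c := by
          apply Finset.sum_lt_sum (fun x _ => conjClass_card_le_card_commutator x)
          refine ⟨ConjClasses.mk 1, Finset.mem_univ _, ?_⟩
          rw [hone, Set.ncard_singleton]
          omega
      _ = k * c := by
          rw [Finset.sum_const, Finset.card_univ, smul_eq_mul, hk, Nat.card_eq_fintype_card]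
  have hn0 : 0 < n := Nat.card_pos
  have hc0 : 0 < c := by omega
  have hp2 : 2 ≤ p := hp.two_le
  rw [commProb_def']
  have h1 : (2 * p ^ 2 + p - 2 : ℚ) / (p : ℚ) ^ 5 ≤ 1 / (c : ℚ) := by
    rw [div_le_div_iff₀ (by positivity) (by exact_mod_cast hc0)]
    have hcq : (c : ℚ) ≤ (p : ℚ) ^ 2 := by exact_mod_cast hcomm
    have hpq : (2 : ℚ) ≤ (p : ℚ) := by exact_mod_cast hp2
    have hcq0 : (0 : ℚ) < (c : ℚ) := by exact_mod_cast hc0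
    have h0 : (0 : ℚ) ≤ 2 * (p : ℚ) ^ 2 + (p : ℚ) - 2 := by nlinarith
    have ha : (2 * (p : ℚ) ^ 2 + (p : ℚ) - 2) * (c : ℚ) ≤
        (2 * (p : ℚ) ^ 2 + (p : ℚ) - 2) * (p : ℚ) ^ 2 := by
      exact mul_le_mul_of_nonneg_left hcq h0
    have key : (0 : ℚ) ≤ (p : ℚ) ^ 2 * ((p : ℚ) - 2) * (((p : ℚ) - 1) * ((p : ℚ) + 1)) := by
      apply mul_nonneg (mul_nonneg (sq_nonneg _) (by linarith))
      apply mul_nonneg <;> linarith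
    nlinarith [key, ha]
  refine lt_of_le_of_lt h1 ?_
  rw [div_lt_div_iff₀ (by exact_mod_cast hc0) (by exact_mod_cast hn0)]
  have hq : (n : ℚ) < (k : ℚ) * (c : ℚ) := by exact_mod_cast hkey
  push_cast
  linarith
end

section
/- In a nilpotent group with upper central series 1 = Z₀(G) ≤ Z₁(G) ≤ Z₂(G) ≤ ..., for every i ≥ 1 the exponent of Z_{i+1}(G)/Z_i(G) divides the exponent of Z_i(G)/Z_{i-1}(G). -/
open scoped commutatorElement

private lemma commutator_pow_left_of_commute {M : Type*} [Group M] (a b : M)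
    (h : Commute ⁅a, b⁆ a) : ∀ n : ℕ, ⁅a ^ n, b⁆ = ⁅a, b⁆ ^ n
  | 0 => by simp
  | n + 1 => by
    have h1 : ⁅a ^ (n + 1), b⁆ = a * ⁅a ^ n, b⁆ * a⁻¹ * ⁅a, b⁆ := by
      simp only [commutatorElement_def, pow_succ']
      group
    have h2 : Commute a (⁅a, b⁆ ^ n) := (h.pow_left n).symm
    rw [h1, commutator_pow_left_of_commute a b h n, h2.eq, mul_assoc,
      mul_assoc, mul_inv_cancel_left, ← pow_succ]

theorem exponent_upper_central_factors_dvd {G : Type*} [Group G] [Finite G]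
    (hG : Group.IsNilpotent G) (i : ℕ) (hi : 1 ≤ i) :
    Monoid.exponent
        ((Subgroup.upperCentralSeries G (i + 1)) ⧸
          ((Subgroup.upperCentralSeries G i).subgroupOf (Subgroup.upperCentralSeries G (i + 1)))) ∣
      Monoid.exponent
        ((Subgroup.upperCentralSeries G i) ⧸
          ((Subgroup.upperCentralSeries G (i - 1)).subgroupOf (Subgroup.upperCentralSeries G i))) := by
  obtain ⟨j, rfl⟩ : ∃ j, i = j + 1 := ⟨i - 1, (Nat.succ_pred_eq_of_pos hi).symm⟩
  set n := Monoid.exponent ((Subgroup.upperCentralSeries G (j + 1)) ⧸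
      ((Subgroup.upperCentralSeries G (j + 1 - 1)).subgroupOf (Subgroup.upperCentralSeries G (j + 1)))) with hn
  set H := Subgroup.upperCentralSeries G (j + 1 - 1) with hH
  -- elements of Z_{j+1} raised to the n-th power land in Z_j = H
  have hpow : ∀ c : G, c ∈ Subgroup.upperCentralSeries G (j + 1) → c ^ n ∈ H := by
    intro c hc
    have h1 : ((⟨c, hc⟩ : Subgroup.upperCentralSeries G (j + 1)) : Subgroup.upperCentralSeries G (j + 1)) ^ n
        ∈ H.subgroupOf (Subgroup.upperCentralSeries G (j + 1)) := by
      have := Monoid.pow_exponent_eq_one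
        (QuotientGroup.mk (s := H.subgroupOf
          (Subgroup.upperCentralSeries G (j + 1))) (⟨c, hc⟩ : Subgroup.upperCentralSeries G (j + 1)))
      rw [← QuotientGroup.mk_pow, QuotientGroup.eq_one_iff] at this
      exact this
    simpa [Subgroup.mem_subgroupOf] using h1
  -- elements of Z_{j+1} are central mod H
  have hcent : ∀ c : G, c ∈ Subgroup.upperCentralSeries G (j + 1) → ∀ a : G,
      Commute (QuotientGroup.mk (s := H) c) (QuotientGroup.mk (s := H) a) := by
    intro c hc a
    have h1 : c * a * c⁻¹ * a⁻¹ ∈ H :=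
      (mem_upperCentralSeries_succ_iff (n := j + 1 - 1)).mp hc a
    rw [← QuotientGroup.eq_one_iff (N := H)] at h1
    have h2 : (QuotientGroup.mk (s := H) c) * (QuotientGroup.mk a) *
        (QuotientGroup.mk c)⁻¹ * (QuotientGroup.mk a)⁻¹ = 1 := by
      simpa using h1
    unfold Commute SemiconjBy
    rw [← mul_inv_eq_one, mul_inv_rev, ← mul_assoc]
    exact h2
  refine Monoid.exponent_dvd_of_forall_pow_eq_one fun q => ?_
  refine QuotientGroup.induction_on q fun x => ?_
  rw [← QuotientGroup.mk_pow, QuotientGroup.eq_one_iff]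
  rw [Subgroup.mem_subgroupOf]
  have hx : (x : G) ∈ Subgroup.upperCentralSeries G (j + 1 + 1) := x.2
  have hcoe : ((x ^ n : Subgroup.upperCentralSeries G (j + 1 + 1)) : G) = (x : G) ^ n := rfl
  rw [hcoe, mem_upperCentralSeries_succ_iff]
  intro g
  refine (QuotientGroup.eq_one_iff (N := H) _).mp ?_
  have hcomm : ⁅(x : G), g⁆ ∈ Subgroup.upperCentralSeries G (j + 1) :=
    (mem_upperCentralSeries_succ_iff).mp hx g
  have key : ⁅(QuotientGroup.mk (s := H) (x : G)) ^ n, (QuotientGroup.mk g : G ⧸ H)⁆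
      = ⁅(QuotientGroup.mk (s := H) (x : G)), (QuotientGroup.mk g : G ⧸ H)⁆ ^ n := by
    apply commutator_pow_left_of_commute
    have h3 : ⁅(QuotientGroup.mk (s := H) (x : G)), (QuotientGroup.mk g : G ⧸ H)⁆
        = QuotientGroup.mk (s := H) ⁅(x : G), g⁆ := by
      simp [commutatorElement_def]
    rw [h3]
    exact hcent _ hcomm _
  have hfin : (QuotientGroup.mk (s := H) (⁅(x : G), g⁆ ^ n)) = 1 := by
    rw [QuotientGroup.eq_one_iff]
    exact hpow _ hcomm
  calc QuotientGroup.mk (s := H) ((x : G) ^ n * g * ((x : G) ^ n)⁻¹ * g⁻¹)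
      = ⁅(QuotientGroup.mk (s := H) (x : G)) ^ n, (QuotientGroup.mk g : G ⧸ H)⁆ := by
        simp [commutatorElement_def]
    _ = ⁅(QuotientGroup.mk (s := H) (x : G)), (QuotientGroup.mk g : G ⧸ H)⁆ ^ n := key
    _ = QuotientGroup.mk (s := H) (⁅(x : G), g⁆ ^ n) := by simp [commutatorElement_def]
    _ = 1 := hfin
end

section
/- Isoclinic finite groups have equal commuting probability: if G and H are isoclinic finite groups, then cp(G) = cp(H). -/
open scoped commutatorElement

section Aux

variable {G : Type*} [Group G]

private lemma comm_mul_center (a b z w : G) (hz : z ∈ Subgroup.center G)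
    (hw : w ∈ Subgroup.center G) : ⁅a * z, b * w⁆ = ⁅a, b⁆ := by
  have hz' := Subgroup.mem_center_iff.mp hz
  have hw' := Subgroup.mem_center_iff.mp hw
  have h1 : z * b = b * z := (hz' b).symm
  have h2 : w * z⁻¹ = z⁻¹ * w := (hw' z⁻¹).symm
  have h3 : w * a⁻¹ = a⁻¹ * w := (hw' a⁻¹).symm
  simp only [commutatorElement_def, mul_inv_rev]
  calc a * z * (b * w) * (z⁻¹ * a⁻¹) * (w⁻¹ * b⁻¹)
      = a * (z * b) * ((w * z⁻¹) * a⁻¹) * (w⁻¹ * b⁻¹) := by group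
    _ = a * (b * z) * ((z⁻¹ * w) * a⁻¹) * (w⁻¹ * b⁻¹) := by rw [h1, h2]
    _ = a * b * ((w * a⁻¹) * w⁻¹) * b⁻¹ := by group
    _ = a * b * ((a⁻¹ * w) * w⁻¹) * b⁻¹ := by rw [h3]
    _ = a * b * a⁻¹ * b⁻¹ := by group

private lemma comm_eq_of_coset_eq {a b c d : G}
    (h1 : (a : G ⧸ Subgroup.center G) = (c : G ⧸ Subgroup.center G))
    (h2 : (b : G ⧸ Subgroup.center G) = (d : G ⧸ Subgroup.center G)) :
    ⁅a, b⁆ = ⁅c, d⁆ := by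
  have hz : a⁻¹ * c ∈ Subgroup.center G := QuotientGroup.eq.mp h1
  have hw : b⁻¹ * d ∈ Subgroup.center G := QuotientGroup.eq.mp h2
  calc ⁅a, b⁆ = ⁅a * (a⁻¹ * c), b * (b⁻¹ * d)⁆ := (comm_mul_center a b _ _ hz hw).symm
    _ = ⁅c, d⁆ := by group

/-- The property on pairs of cosets: representatives commute. -/
private def PC (x : (G ⧸ Subgroup.center G) × (G ⧸ Subgroup.center G)) : Prop :=
  ⁅x.1.out, x.2.out⁆ = 1

private noncomputable def commEquiv :
    { p : G × G // Commute p.1 p.2 } ≃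
      { x : (G ⧸ Subgroup.center G) × (G ⧸ Subgroup.center G) // PC x } ×
        (Subgroup.center G × Subgroup.center G) where
  toFun p :=
    ⟨⟨((p.1.1 : G ⧸ Subgroup.center G), (p.1.2 : G ⧸ Subgroup.center G)), by
        have h1 : ((((p.1.1 : G ⧸ Subgroup.center G)).out : G) : G ⧸ Subgroup.center G)
            = (p.1.1 : G ⧸ Subgroup.center G) := QuotientGroup.out_eq' _
        have h2 : ((((p.1.2 : G ⧸ Subgroup.center G)).out : G) : G ⧸ Subgroup.center G)
            = (p.1.2 : G ⧸ Subgroup.center G) := QuotientGroup.out_eq' _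
        show ⁅_, _⁆ = 1
        rw [comm_eq_of_coset_eq h1 h2, commutatorElement_eq_one_iff_commute]
        exact p.2⟩,
      ⟨((p.1.1 : G ⧸ Subgroup.center G)).out⁻¹ * p.1.1,
        QuotientGroup.eq.mp (QuotientGroup.out_eq' _)⟩,
      ⟨((p.1.2 : G ⧸ Subgroup.center G)).out⁻¹ * p.1.2,
        QuotientGroup.eq.mp (QuotientGroup.out_eq' _)⟩⟩
  invFun y :=
    ⟨(y.1.1.1.out * y.2.1, y.1.1.2.out * y.2.2), by
      rw [← commutatorElement_eq_one_iff_commute,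
        comm_mul_center _ _ _ _ y.2.1.2 y.2.2.2]
      exact y.1.2⟩
  left_inv p := by
    ext <;> simp [mul_inv_cancel_left]
  right_inv y := by
    have h1 : ((y.1.1.1.out * (y.2.1 : G) : G) : G ⧸ Subgroup.center G) = y.1.1.1 := by
      rw [QuotientGroup.mk_mul_of_mem _ y.2.1.2, QuotientGroup.out_eq']
    have h2 : ((y.1.1.2.out * (y.2.2 : G) : G) : G ⧸ Subgroup.center G) = y.1.1.2 := by
      rw [QuotientGroup.mk_mul_of_mem _ y.2.2.2, QuotientGroup.out_eq']
    ext
    · exact h1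
    · exact h2
    · show (_ : G) = _
      simp only [h1]
      rw [inv_mul_cancel_left]
    · show (_ : G) = _
      simp only [h2]
      rw [inv_mul_cancel_left]

private lemma commProb_eq_quot [Finite G] :
    commProb G = Nat.card { x : (G ⧸ Subgroup.center G) × (G ⧸ Subgroup.center G) // PC x } /
      (Nat.card (G ⧸ Subgroup.center G) : ℚ) ^ 2 := by
  have hcard : Nat.card { p : G × G // Commute p.1 p.2 } =
      Nat.card { x : (G ⧸ Subgroup.center G) × (G ⧸ Subgroup.center G) // PC x } *
        (Nat.card (Subgroup.center G)) ^ 2 := by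
    rw [Nat.card_congr commEquiv, Nat.card_prod, Nat.card_prod, sq]
  have hG : Nat.card G = Nat.card (G ⧸ Subgroup.center G) * Nat.card (Subgroup.center G) :=
    Subgroup.card_eq_card_quotient_mul_card_subgroup _
  have hz : ((Nat.card (Subgroup.center G) : ℚ)) ^ 2 ≠ 0 := by
    have : Nat.card (Subgroup.center G) ≠ 0 := Nat.card_pos.ne'
    positivity
  rw [commProb_def, hcard, hG]
  push_cast
  rw [mul_pow, mul_div_mul_right _ _ hz]

end Aux

theorem commProb_eq_of_isoclinic {G H : Type*} [Group G] [Group H] [Finite G] [Finite H]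
    (hiso : ∃ (α : (G ⧸ Subgroup.center G) ≃* (H ⧸ Subgroup.center H))
      (β : commutator G ≃* commutator H),
      ∀ (a b : G) (a' b' : H),
        α ((a : G ⧸ Subgroup.center G)) = (a' : H ⧸ Subgroup.center H) →
        α ((b : G ⧸ Subgroup.center G)) = (b' : H ⧸ Subgroup.center H) →
        (β ⟨⁅a, b⁆, by
          rw [commutator_def]
          exact Subgroup.commutator_mem_commutator (Subgroup.mem_top a)
            (Subgroup.mem_top b)⟩ : H) = ⁅a', b'⁆) :
    commProb G = commProb H := by
  obtain ⟨α, β, hαβ⟩ := hiso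
  -- key lemma: commuting transfers
  have key : ∀ (a b : G) (a' b' : H),
      α ((a : G ⧸ Subgroup.center G)) = (a' : H ⧸ Subgroup.center H) →
      α ((b : G ⧸ Subgroup.center G)) = (b' : H ⧸ Subgroup.center H) →
      (⁅a, b⁆ = 1 ↔ ⁅a', b'⁆ = 1) := by
    intro a b a' b' ha hb
    have h := hαβ a b a' b' ha hb
    constructor
    · intro h1
      rw [← h]
      have : (⟨⁅a, b⁆, by
          rw [commutator_def]
          exact Subgroup.commutator_mem_commutator (Subgroup.mem_top a)
            (Subgroup.mem_top b)⟩ : commutator G) = 1 := by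
        exact Subtype.ext h1
      rw [this, map_one]
      rfl
    · intro h1
      have h2 : β ⟨⁅a, b⁆, by
          rw [commutator_def]
          exact Subgroup.commutator_mem_commutator (Subgroup.mem_top a)
            (Subgroup.mem_top b)⟩ = 1 := by
        apply Subtype.ext
        rw [h, h1]
        rfl
      have h3 := β.injective (h2.trans (map_one β).symm)
      exact congrArg Subtype.val h3
  -- equivalence of the coset-pair sets
  have hPC : ∀ x : (G ⧸ Subgroup.center G) × (G ⧸ Subgroup.center G),
      PC x ↔ PC ((α x.1, α x.2) : (H ⧸ Subgroup.center H) × (H ⧸ Subgroup.center H)) := by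
    intro x
    apply key
    · rw [QuotientGroup.out_eq', QuotientGroup.out_eq']
    · rw [QuotientGroup.out_eq', QuotientGroup.out_eq']
  have hcardP : Nat.card { x : (G ⧸ Subgroup.center G) × (G ⧸ Subgroup.center G) // PC x } =
      Nat.card { x : (H ⧸ Subgroup.center H) × (H ⧸ Subgroup.center H) // PC x } := by
    apply Nat.card_congr
    exact (Equiv.subtypeEquiv (α.toEquiv.prodCongr α.toEquiv) hPC)
  have hcardQ : Nat.card (G ⧸ Subgroup.center G) = Nat.card (H ⧸ Subgroup.center H) :=
    Nat.card_congr α.toEquiv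
  rw [commProb_eq_quot, commProb_eq_quot, hcardP, hcardQ]
end
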